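/- (Upper bound (28) for the Liapunov functional) Under the standing hypotheses, fix t ≥ 0 and σ > 0, let φ : [0,π] → ℝ be C² with φ(0) = φ(π) = 0, and let ψ : [0,π] → ℝ be continuous. Let θ > θ₂ and γ ≥ γ₃(σ) := γ₂(σ) + 1 + (a' + θ)/μ + (a' + 1)θ, where θ₂, γ₂(σ) are as in the lower-bound lemma. Set m(r) := max{|F'(ζ)| : |ζ| ≤ r}, B(d)² := (1 + m(d))·d², and g(t) := C(t) − ε'(t)/2 + 1. If d(φ,ψ) ≤ σ, then W(φ,ψ,t;γ,θ) ≤ (1 + γ)·g(t)·B(d(φ,ψ))². -/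

import Mathlib

open Real Set MeasureTheory intervalIntegral

set_option maxHeartbeats 2000000 in
/-- Upper bound (28) for the Liapunov functional: under the standing
hypotheses, for `θ > θ₂` and `γ ≥ γ₃(σ)`, if `d(φ,ψ) ≤ σ` then
`W(φ,ψ,t;γ,θ) ≤ (1+γ) g(t) B(d(φ,ψ))²`, where `g(t) = C(t) − ε'(t)/2 + 1`,
`B(d)² = (1 + m(d)) d²` and `m(r) = max{|F'(ζ)| : |ζ| ≤ r}`. -/
theorem liapunov_upper_bound
    (ε ε' ε'' C C' F F' : ℝ → ℝ) (a' A τ k ρ μ Cbar εbar ebar : ℝ)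
    (hεderiv : ∀ t ∈ Ici (0:ℝ), HasDerivWithinAt ε (ε' t) (Ici 0) t)
    (hε'deriv : ∀ t ∈ Ici (0:ℝ), HasDerivWithinAt ε' (ε'' t) (Ici 0) t)
    (hε''cont : ContinuousOn ε'' (Ici 0))
    (hεnonneg : ∀ t ∈ Ici (0:ℝ), 0 ≤ ε t)
    (hCderiv : ∀ t ∈ Ici (0:ℝ), HasDerivWithinAt C (C' t) (Ici 0) t)
    (hC'cont : ContinuousOn C' (Ici 0))
    (hFderiv : ∀ z, HasDerivAt F (F' z) z)
    (hF'cont : Continuous F')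
    (hF0 : F 0 = 0)
    (hCbar : IsGLB (C '' Ioi (0:ℝ)) Cbar) (hCbarpos : 0 < Cbar)
    (hεbar : IsGLB (ε '' Ioi (0:ℝ)) εbar)
    (hebar : IsGLB (ε'' '' Ioi (0:ℝ)) ebar)
    (hA : 0 ≤ A) (hτ : 0 ≤ τ) (hk : 0 ≤ k) (hρ : 0 < ρ) (hμ : 0 < μ)
    (hFk : ∀ z, |z| < ρ → F' z ≤ k)
    (hCk : k ≤ Cbar)
    (hdiss : ∀ t ∈ Ici (0:ℝ), μ * (1 + ε t) ≤ C t - ε' t)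
    (hmuk : 0 < μ + Cbar / 2 - 2 * k)
    (ha' : 0 ≤ a')
    (ha'ε : 0 < a' + εbar / 2)
    -- data of the lemma
    (t σ θ γ : ℝ) (ht : 0 ≤ t) (hσ : 0 < σ)
    (φ φ' φ'' ψ : ℝ → ℝ)
    (hφ' : ∀ x ∈ Icc (0:ℝ) π, HasDerivWithinAt φ (φ' x) (Icc 0 π) x)
    (hφ'' : ∀ x ∈ Icc (0:ℝ) π, HasDerivWithinAt φ' (φ'' x) (Icc 0 π) x)
    (hφ''cont : ContinuousOn φ'' (Icc (0:ℝ) π))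
    (hψcont : ContinuousOn ψ (Icc (0:ℝ) π))
    (hbc0 : φ 0 = 0) (hbcπ : φ π = 0)
    (hθ : max (max (max (2 * a') (2 * k / μ - a'))
          ((5 - ebar - a' * (μ - Cbar)) / (μ + Cbar / 2 - 2 * k)))
        ((k + 5/4) / (a' + εbar / 2)) < θ)
    (hγ : (1 + θ) / (a' + εbar)
        + A ^ 2 * (1 / μ + θ / Cbar) / (a' + εbar) * σ ^ (2 * τ)
        + θ ^ 2 + 1
        + 1 + (a' + θ) / μ + (a' + 1) * θ ≤ γ)
    (hdσ : Real.sqrt (∫ x in (0:ℝ)..π,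
        ((ε t)^2 * (φ'' x)^2 + (φ' x)^2 + (φ x)^2 + (ψ x)^2)) ≤ σ) :
    (∫ x in (0:ℝ)..π, (1/2) * (γ * (ψ x)^2 + (ε t * φ'' x - ψ x)^2
        + (C t * (1 + γ) - ε' t + ε t * (a' + θ)) * (φ' x)^2
        + a' * θ * (φ x)^2 + 2 * θ * φ x * ψ x
        - 2 * (1 + γ) * ∫ z in (0:ℝ)..(φ x), F z)) ≤
      (1 + γ) * (C t - ε' t / 2 + 1) *
        ((1 + sSup ((fun ζ => |F' ζ|) ''
            Icc (-(Real.sqrt (∫ x in (0:ℝ)..π,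
              ((ε t)^2 * (φ'' x)^2 + (φ' x)^2 + (φ x)^2 + (ψ x)^2))))
              (Real.sqrt (∫ x in (0:ℝ)..π,
              ((ε t)^2 * (φ'' x)^2 + (φ' x)^2 + (φ x)^2 + (ψ x)^2))))) *
          (∫ x in (0:ℝ)..π,
            ((ε t)^2 * (φ'' x)^2 + (φ' x)^2 + (φ x)^2 + (ψ x)^2))) := by
  have hπ : (0:ℝ) ≤ π := Real.pi_nonneg
  -- abbreviations
  set I : ℝ := ∫ x in (0:ℝ)..π,
      ((ε t)^2 * (φ'' x)^2 + (φ' x)^2 + (φ x)^2 + (ψ x)^2) with hIdef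
  set dd : ℝ := Real.sqrt I with hdd
  set m : ℝ := sSup ((fun ζ => |F' ζ|) '' Icc (-dd) dd) with hm
  clear_value I dd m
  -- basic continuity
  have hφc : ContinuousOn φ (Icc 0 π) := fun x hx => (hφ' x hx).continuousWithinAt
  have hφ'c : ContinuousOn φ' (Icc 0 π) := fun x hx => (hφ'' x hx).continuousWithinAt
  have hFcont : Continuous F := by
    rw [continuous_iff_continuousAt]; exact fun z => (hFderiv z).continuousAt
  have hIntc : ContinuousOn (fun x => (ε t)^2 * (φ'' x)^2 + (φ' x)^2 + (φ x)^2 + (ψ x)^2)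
      (Icc (0:ℝ) π) := by fun_prop
  have hQc : ContinuousOn (fun x => (φ x)^2 + (φ' x)^2) (Icc (0:ℝ) π) := by fun_prop
  -- integrability helper
  have hII : ∀ {f : ℝ → ℝ}, ContinuousOn f (Icc (0:ℝ) π) → ∀ a b : ℝ, a ∈ Icc (0:ℝ) π →
      b ∈ Icc (0:ℝ) π → IntervalIntegrable f volume a b := by
    intro f hf a b ha hb
    apply ContinuousOn.intervalIntegrable
    apply hf.mono
    intro x hx
    rcases le_total a b with hab | hab
    · rw [uIcc_of_le hab] at hx
      exact ⟨ha.1.trans hx.1, hx.2.trans hb.2⟩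
    · rw [uIcc_of_ge hab] at hx
      exact ⟨hb.1.trans hx.1, hx.2.trans ha.2⟩
  have h0mem : (0:ℝ) ∈ Icc (0:ℝ) π := ⟨le_rfl, hπ⟩
  have hπmem : π ∈ Icc (0:ℝ) π := ⟨hπ, le_rfl⟩
  -- nonnegativity of I
  have hI0 : 0 ≤ I := by
    rw [hIdef]
    apply intervalIntegral.integral_nonneg hπ
    intro x _
    positivity
  have hdd0 : 0 ≤ dd := by rw [hdd]; exact Real.sqrt_nonneg _
  have hdd2 : dd ^ 2 = I := by rw [hdd]; exact Real.sq_sqrt hI0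
  -- Sobolev-type bound : (φ b)^2 ≤ I for b ∈ [0,π]
  have hsob : ∀ b ∈ Icc (0:ℝ) π, (φ b)^2 ≤ I := by
    intro b hb
    have h2c : ContinuousOn (fun x => 2 * φ x * φ' x) (Icc (0:ℝ) π) := by fun_prop
    have hFTC : (∫ x in (0:ℝ)..b, 2 * φ x * φ' x) = (φ b)^2 - (φ 0)^2 := by
      apply intervalIntegral.integral_eq_sub_of_hasDeriv_right_of_le hb.1
      · exact (hφc.mono (Icc_subset_Icc le_rfl hb.2)).pow 2
      · intro x hx
        have hxm : x ∈ Icc (0:ℝ) π := ⟨hx.1.le, hx.2.le.trans hb.2⟩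
        have hnx : Icc (0:ℝ) π ∈ nhds x := Icc_mem_nhds hx.1 (lt_of_lt_of_le hx.2 hb.2)
        have hdx : HasDerivAt φ (φ' x) x := (hφ' x hxm).hasDerivAt hnx
        have := (hdx.pow 2).hasDerivWithinAt (s := Ioi x)
        convert this using 1
        · rfl
        · rw [show ((2:ℕ):ℝ) = 2 from by norm_num, show (2:ℕ) - 1 = 1 from rfl, pow_one]
      · exact hII h2c 0 b h0mem hb
    have h1 : (φ b)^2 = ∫ x in (0:ℝ)..b, 2 * φ x * φ' x := by
      rw [hFTC, hbc0]; ring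
    have h2 : (∫ x in (0:ℝ)..b, 2 * φ x * φ' x) ≤
        ∫ x in (0:ℝ)..b, ((φ x)^2 + (φ' x)^2) := by
      apply intervalIntegral.integral_mono_on hb.1 (hII h2c 0 b h0mem hb)
        (hII hQc 0 b h0mem hb)
      intro x _
      linarith only [sq_nonneg (φ x - φ' x)]
    have h3 : (∫ x in (0:ℝ)..b, ((φ x)^2 + (φ' x)^2)) ≤
        ∫ x in (0:ℝ)..π, ((φ x)^2 + (φ' x)^2) := by
      have hadd := intervalIntegral.integral_add_adjacent_intervals
        (hII hQc 0 b h0mem hb) (hII hQc b π hb hπmem)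
        (f := fun x => (φ x)^2 + (φ' x)^2)
      have hpos : 0 ≤ ∫ x in b..π, ((φ x)^2 + (φ' x)^2) := by
        apply intervalIntegral.integral_nonneg hb.2
        intro x _; positivity
      linarith only [hadd, hpos]
    have h4 : (∫ x in (0:ℝ)..π, ((φ x)^2 + (φ' x)^2)) ≤ I := by
      rw [hIdef]
      apply intervalIntegral.integral_mono_on hπ (hII hQc 0 π h0mem hπmem)
        (hII hIntc 0 π h0mem hπmem)
      intro x _
      linarith only [mul_nonneg (sq_nonneg (ε t)) (sq_nonneg (φ'' x)), sq_nonneg (ψ x)]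
    linarith only [h1, h2, h3, h4]
  have hsd : ∀ b ∈ Icc (0:ℝ) π, |φ b| ≤ dd := by
    intro b hb
    rw [← Real.sqrt_sq_eq_abs, hdd]
    exact Real.sqrt_le_sqrt (hsob b hb)
  -- facts about m
  have hbddm : BddAbove ((fun ζ => |F' ζ|) '' Icc (-dd) dd) :=
    (isCompact_Icc.image_of_continuousOn (hF'cont.abs.continuousOn)).bddAbove
  have h0dd : (0:ℝ) ∈ Icc (-dd) dd := ⟨by linarith, hdd0⟩
  have hm0 : 0 ≤ m := le_trans (abs_nonneg (F' 0)) (by rw [hm]; exact le_csSup hbddm ⟨0, h0dd, rfl⟩)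
  have hmF : ∀ c ∈ Icc (-dd) dd, |F' c| ≤ m := fun c hc => by rw [hm]; exact le_csSup hbddm ⟨c, hc, rfl⟩
  have hFz : ∀ z ∈ Icc (-dd) dd, |F z| ≤ m * |z| := by
    intro z hz
    have := Convex.norm_image_sub_le_of_norm_hasDerivWithin_le
      (f := F) (f' := F') (s := Icc (-dd) dd)
      (fun y _ => (hFderiv y).hasDerivWithinAt) (fun y hy => hmF y hy)
      (convex_Icc _ _) h0dd hz
    simpa [hF0, Real.norm_eq_abs] using this
  -- bound on the primitive of F
  have hJ : ∀ b ∈ Icc (0:ℝ) π, |∫ z in (0:ℝ)..(φ b), F z| ≤ m * (φ b)^2 := by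
    intro b hb
    have hs : |φ b| ≤ dd := hsd b hb
    have h1 : ∀ z ∈ Set.uIoc (0:ℝ) (φ b), ‖F z‖ ≤ m * |φ b| := by
      intro z hz
      have hz' : |z| ≤ |φ b| := by
        rcases Set.mem_uIoc.mp hz with h | h
        · rw [abs_of_pos h.1]; exact h.2.trans (le_abs_self _)
        · rw [abs_of_nonpos h.2]
          have := neg_abs_le (φ b)
          linarith only [this, h.1]
      have hzd : z ∈ Icc (-dd) dd := by
        have := hz'.trans hs
        exact abs_le.mp this
      calc ‖F z‖ = |F z| := rfl
        _ ≤ m * |z| := hFz z hzd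
        _ ≤ m * |φ b| := mul_le_mul_of_nonneg_left hz' hm0
    have h2 := intervalIntegral.norm_integral_le_of_norm_le_const h1
    have h3 : |φ b - 0| = |φ b| := by rw [sub_zero]
    calc |∫ z in (0:ℝ)..(φ b), F z| = ‖∫ z in (0:ℝ)..(φ b), F z‖ := rfl
      _ ≤ m * |φ b| * |φ b - 0| := h2
      _ = m * (φ b)^2 := by rw [sub_zero, mul_assoc, abs_mul_abs_self, sq]
  -- scalar facts
  have he0 : 0 ≤ ε t := hεnonneg t ht
  have hge : μ * (1 + ε t) ≤ C t - ε' t := hdiss t ht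
  have hεbar0 : 0 ≤ εbar := by
    apply hεbar.2
    rintro y ⟨s, hs, rfl⟩
    exact hεnonneg s (Set.mem_Ici.mpr (le_of_lt (Set.mem_Ioi.mp hs)))
  have hCt : Cbar ≤ C t := by
    rcases ht.lt_or_eq with h | h
    · exact hCbar.1 ⟨t, h, rfl⟩
    · subst h
      have hcw : ContinuousWithinAt C (Ici 0) 0 := (hCderiv 0 Set.self_mem_Ici).continuousWithinAt
      have htend : Filter.Tendsto C (nhdsWithin 0 (Ioi 0)) (nhds (C 0)) :=
        hcw.mono_left (nhdsWithin_mono _ Ioi_subset_Ici_self)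
      refine ge_of_tendsto htend ?_
      filter_upwards [self_mem_nhdsWithin] with s hs
      exact hCbar.1 ⟨s, hs, rfl⟩
  have hCtpos : 0 < C t := lt_of_lt_of_le hCbarpos hCt
  have hθpos : 0 < θ := by
    have h1 : (k + 5/4) / (a' + εbar / 2) < θ := lt_of_le_of_lt (le_max_right _ _) hθ
    have h2 : 0 < (k + 5/4) / (a' + εbar / 2) := div_pos (by linarith) ha'ε
    linarith only [h1, h2]
  have hT1 : 0 ≤ (1 + θ) / (a' + εbar) := div_nonneg (by linarith) (by linarith)
  have hT2 : 0 ≤ A ^ 2 * (1 / μ + θ / Cbar) / (a' + εbar) * σ ^ (2 * τ) := by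
    apply mul_nonneg
    · apply div_nonneg
      · apply mul_nonneg (sq_nonneg A)
        have : 0 ≤ 1 / μ := by positivity
        have : 0 ≤ θ / Cbar := by positivity
        linarith
      · linarith
    · exact Real.rpow_nonneg hσ.le _
  have hγbase : θ ^ 2 + 1 + 1 + (a' + θ) / μ + (a' + 1) * θ ≤ γ := by linarith only [hγ, hT1, hT2]
  have hdivnn : 0 ≤ (a' + θ) / μ := div_nonneg (by linarith) hμ.le
  have haθ : 0 ≤ (a' + 1) * θ := mul_nonneg (by linarith) hθpos.le
  have hγ2 : 2 ≤ γ := by linarith only [hγbase, sq_nonneg θ, hdivnn, haθ]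
  have hγpos : 0 < γ := by linarith only [hγ2]
  have hθγ : θ ≤ γ := by linarith only [hγbase, sq_nonneg (θ - 1), hθpos.le, hdivnn, haθ]
  have hγa : (a' + 1) * θ ≤ γ := by linarith only [hγbase, sq_nonneg θ, hdivnn]
  have hγμ : a' + θ ≤ γ * μ := by
    have h1 : (a' + θ) / μ ≤ γ := by linarith only [hγbase, sq_nonneg θ, haθ]
    calc a' + θ = (a' + θ) / μ * μ := by field_simp
      _ ≤ γ * μ := mul_le_mul_of_nonneg_right h1 hμ.le
  set g : ℝ := C t - ε' t / 2 + 1 with hgdef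
  clear_value g
  have hg1 : 1 ≤ g := by linarith only [hgdef, hge, hCtpos, mul_nonneg hμ.le he0, hμ]
  set K : ℝ := (1 + γ) * g * (1 + m) with hK
  clear_value K
  have h1γ : (0:ℝ) < 1 + γ := by linarith only [hγpos]
  have hgm : 0 ≤ (1 + γ) * g * m :=
    mul_nonneg (mul_nonneg h1γ.le (by linarith : (0:ℝ) ≤ g)) hm0
  have hgg : 0 ≤ (1 + γ) * (g - 1) := mul_nonneg h1γ.le (by linarith)
  have hKge : (1 + γ) * g ≤ K := by
    have : K = (1 + γ) * g + (1 + γ) * g * m := by rw [hK]; ring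
    linarith only [this, hgm]
  -- coefficient inequalities
  have c1 : 1 ≤ K := by linarith only [hKge, hgg, hγ2]
  have c2 : γ / 2 + 1 + θ / 2 ≤ K := by linarith only [hKge, hgg, hθγ, hγ2]
  have c3 : (C t * (1 + γ) - ε' t + ε t * (a' + θ)) / 2 ≤ K := by
    have hX1 : 0 ≤ γ * (C t - ε' t - μ * (1 + ε t)) :=
      mul_nonneg hγpos.le (by linarith)
    have hX2 : 0 ≤ (γ * μ - (a' + θ)) * ε t :=
      mul_nonneg (by linarith) he0
    have hX3 : 0 ≤ γ * μ := mul_nonneg hγpos.le hμ.le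
    have hexp : (1 + γ) * g = (1 + γ) * (C t - ε' t / 2 + 1) := by rw [hgdef]
    linarith only [hX1, hX2, hX3, hKge, hexp, hCtpos, hγpos]
  have c4 : a' * θ / 2 + θ / 2 + (1 + γ) * m ≤ K := by
    have hX1 : 0 ≤ (1 + γ) * m * (g - 1) :=
      mul_nonneg (mul_nonneg h1γ.le hm0) (by linarith)
    have hKexp : K = (1 + γ) * g + (1 + γ) * m + (1 + γ) * m * (g - 1) := by
      rw [hK]; ring
    linarith only [hX1, hKexp, hgg, hγa, haθ]
  -- pointwise estimate
  have hmain : ∀ x ∈ Icc (0:ℝ) π,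
      (1/2) * (γ * (ψ x)^2 + (ε t * φ'' x - ψ x)^2
        + (C t * (1 + γ) - ε' t + ε t * (a' + θ)) * (φ' x)^2
        + a' * θ * (φ x)^2 + 2 * θ * φ x * ψ x
        - 2 * (1 + γ) * ∫ z in (0:ℝ)..(φ x), F z)
      ≤ K * ((ε t)^2 * (φ'' x)^2 + (φ' x)^2 + (φ x)^2 + (ψ x)^2) := by
    intro x hx
    have hJx0 : -(m * (φ x)^2) ≤ ∫ z in (0:ℝ)..(φ x), F z := by
      have := (abs_le.mp (hJ x hx)).1
      linarith only [this]
    set p := φ'' x; set r := φ' x; set s := φ x; set q := ψ x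
    set J : ℝ := ∫ z in (0:ℝ)..(φ x), F z with hJdef
    clear_value p r s q J
    have hJx : -(m * s^2) ≤ J := hJx0
    have step1 : 2 * θ * s * q ≤ θ * s^2 + θ * q^2 := by
      linarith only [mul_nonneg hθpos.le (sq_nonneg (s - q))]
    have step2 : (1/2) * (ε t * p - q)^2 ≤ (ε t)^2 * p^2 + q^2 := by
      linarith only [sq_nonneg (ε t * p + q)]
    have hms : (0:ℝ) ≤ m * s^2 + J := by
      linarith only [mul_nonneg hm0 (sq_nonneg s), hJx]
    have step3 : -(2 * (1 + γ) * J) ≤ 2 * (1 + γ) * (m * s^2) := by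
      linarith only [mul_nonneg h1γ.le hms]
    have t1 : (ε t)^2 * p^2 ≤ K * ((ε t)^2 * p^2) :=
      le_mul_of_one_le_left (by positivity) c1
    have t2 : (γ / 2 + 1 + θ / 2) * q^2 ≤ K * q^2 :=
      mul_le_mul_of_nonneg_right c2 (sq_nonneg q)
    have t3 : ((C t * (1 + γ) - ε' t + ε t * (a' + θ)) / 2) * r^2 ≤ K * r^2 :=
      mul_le_mul_of_nonneg_right c3 (sq_nonneg r)
    have t4 : (a' * θ / 2 + θ / 2 + (1 + γ) * m) * s^2 ≤ K * s^2 :=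
      mul_le_mul_of_nonneg_right c4 (sq_nonneg s)
    linarith only [t1, t2, t3, t4, step1, step2, step3]
  -- continuity of the left integrand
  have hGc : Continuous (fun y => ∫ z in (0:ℝ)..y, F z) :=
    intervalIntegral.continuous_primitive (fun a b => hFcont.intervalIntegrable a b) 0
  have hLc : ContinuousOn (fun x => (1/2) * (γ * (ψ x)^2 + (ε t * φ'' x - ψ x)^2
        + (C t * (1 + γ) - ε' t + ε t * (a' + θ)) * (φ' x)^2
        + a' * θ * (φ x)^2 + 2 * θ * φ x * ψ x
        - 2 * (1 + γ) * ∫ z in (0:ℝ)..(φ x), F z)) (Icc (0:ℝ) π) := by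
    have hcomp : ContinuousOn (fun x => ∫ z in (0:ℝ)..(φ x), F z) (Icc (0:ℝ) π) :=
      hGc.comp_continuousOn hφc
    fun_prop
  have hRc : ContinuousOn (fun x => K * ((ε t)^2 * (φ'' x)^2 + (φ' x)^2 + (φ x)^2 + (ψ x)^2))
      (Icc (0:ℝ) π) := by fun_prop
  have hfinal := intervalIntegral.integral_mono_on hπ
    (hII hLc 0 π h0mem hπmem) (hII hRc 0 π h0mem hπmem) hmain
  have hconst : (∫ x in (0:ℝ)..π,
      K * ((ε t)^2 * (φ'' x)^2 + (φ' x)^2 + (φ x)^2 + (ψ x)^2)) = K * I := by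
    rw [hIdef]
    exact intervalIntegral.integral_const_mul _ _
  rw [hconst] at hfinal
  have : K * I = (1 + γ) * g * ((1 + m) * I) := by rw [hK]; ring
  linarith only [hfinal, this.le]
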